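/- arXiv:1511.03554 — 2 statements merged into one kernel-verified Lean document; each statement's English description precedes it below -/
import Mathlib

section
/- Let d ≥ 1, m = binomial(d,2), and let A ∈ ℝ^{d×d} be a nonzero skew-symmetric matrix. Let z_A ∈ ℝ^m be the vector listing the strictly upper-triangular entries a_{ij} (i < j) of A in lexicographic order. Then A has rank 2 if and only if z_A^⊤ H z_A = 0 for every H ∈ K, where K = { H ∈ S^m : c_H(x) = 0 for all x ∈ ℝ^d }. -/
open Matrix

/-- The index set of pairs `(i,j)` with `i < j`; it has cardinality `d.choose 2`
and corresponds to the lexicographic enumeration `D_1, …, D_m` used in the paper. -/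
abbrev PairIdx (d : ℕ) := {p : Fin d × Fin d // p.1 < p.2}

/-- The elementary skew-symmetric matrix `S_{ij} = e_i e_jᵀ - e_j e_iᵀ`. -/
noncomputable def skewBasis {d : ℕ} (p : PairIdx d) : Matrix (Fin d) (Fin d) ℝ :=
  Matrix.single p.1.1 p.1.2 1 - Matrix.single p.1.2 p.1.1 1

/-- `c_H(x) = ∑_{p,q} h_{pq} D_p x xᵀ D_qᵀ`. -/
noncomputable def cH {d : ℕ} (H : Matrix (PairIdx d) (PairIdx d) ℝ) (x : Fin d → ℝ) :
    Matrix (Fin d) (Fin d) ℝ :=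
  ∑ p : PairIdx d, ∑ q : PairIdx d,
    H p q • (skewBasis p * Matrix.vecMulVec x x * (skewBasis q)ᵀ)

/-- A function `ℝ^d → ℝ` is (the evaluation of) a homogeneous polynomial of degree `k`. -/
def IsHomPolyFun (d k : ℕ) (f : (Fin d → ℝ) → ℝ) : Prop :=
  ∃ P : MvPolynomial (Fin d) ℝ, P.IsHomogeneous k ∧ ∀ x, f x = MvPolynomial.eval x P


variable {d : ℕ}

lemma skewBasis_apply (p : PairIdx d) (s t : Fin d) :
    skewBasis p s t = (if p.1.1 = s ∧ p.1.2 = t then (1:ℝ) else 0)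
      - (if p.1.2 = s ∧ p.1.1 = t then 1 else 0) := by
  simp [skewBasis, Matrix.single, Matrix.sub_apply]

lemma sum_ind (v : PairIdx d → ℝ) (s t : Fin d) :
    (∑ p : PairIdx d, if p.1 = (s,t) then v p else 0)
      = if h : s < t then v ⟨(s,t),h⟩ else 0 := by
  by_cases h : s < t
  · rw [dif_pos h, Finset.sum_eq_single (⟨(s,t),h⟩ : PairIdx d)]
    · simp
    · intro b _ hb; exact if_neg (fun hc => hb (Subtype.ext hc))
    · intro hmem; exact absurd (Finset.mem_univ _) hmem
  · rw [dif_neg h, Finset.sum_eq_zero]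
    intro p _
    refine if_neg (fun hc => h ?_)
    have := p.2; rw [hc] at this; exact this

lemma sumD (v : PairIdx d → ℝ) (s t : Fin d) :
    (∑ p : PairIdx d, v p * skewBasis p s t)
      = (if h : s < t then v ⟨(s,t), h⟩ else 0)
        - (if h : t < s then v ⟨(t,s), h⟩ else 0) := by
  rw [← sum_ind v s t, ← sum_ind v t s, ← Finset.sum_sub_distrib]
  apply Finset.sum_congr rfl
  intro p _
  rw [skewBasis_apply]
  rcases p with ⟨⟨a,b⟩, hab⟩
  by_cases h1 : a = s ∧ b = t
  · obtain ⟨rfl, rfl⟩ := h1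
    have hne : a ≠ b := ne_of_lt hab
    simp [hne, hne.symm, Prod.ext_iff]
  · by_cases h2 : b = s ∧ a = t
    · obtain ⟨rfl, rfl⟩ := h2
      have hne : b ≠ a := (ne_of_lt hab).symm
      simp [hne, hne.symm, Prod.ext_iff, h1]
    · have h2' : ¬(a = t ∧ b = s) := fun h => h2 ⟨h.2, h.1⟩
      simp [h1, h2, h2', Prod.ext_iff]

lemma mulVec_skewBasis (p : PairIdx d) (x : Fin d → ℝ) (k : Fin d) :
    (skewBasis p).mulVec x k
      = (if k = p.1.1 then x p.1.2 else 0) - (if k = p.1.2 then x p.1.1 else 0) := by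
  rcases p with ⟨⟨a,b⟩, hab⟩
  simp only [Matrix.mulVec, dotProduct, skewBasis_apply, sub_mul, ite_mul, one_mul,
    zero_mul, ite_and, Finset.sum_sub_distrib]
  simp [Finset.sum_ite_eq, eq_comm]

lemma dot_skew (p : PairIdx d) (x y : Fin d → ℝ) :
    y ⬝ᵥ (skewBasis p).mulVec x = y p.1.1 * x p.1.2 - y p.1.2 * x p.1.1 := by
  simp only [dotProduct, mulVec_skewBasis, mul_sub, mul_ite, mul_zero,
    Finset.sum_sub_distrib]
  simp [Finset.sum_ite_eq', mul_comm]

lemma sandwich (M N : Matrix (Fin d) (Fin d) ℝ) (x : Fin d → ℝ) :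
    M * vecMulVec x x * Nᵀ = vecMulVec (M.mulVec x) (N.mulVec x) := by
  ext s t
  simp only [Matrix.mul_apply, vecMulVec_apply, transpose_apply, Matrix.mulVec, dotProduct,
    Finset.sum_mul]
  rw [Finset.sum_comm]
  refine Finset.sum_congr rfl fun m _ => ?_
  rw [Finset.mul_sum]
  exact Finset.sum_congr rfl fun n _ => by ring

lemma cH_apply (H : Matrix (PairIdx d) (PairIdx d) ℝ) (x : Fin d → ℝ) (s t : Fin d) :
    cH H x s t = ∑ p : PairIdx d, ∑ q : PairIdx d,
      H p q * ((skewBasis p).mulVec x s * (skewBasis q).mulVec x t) := by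
  simp only [cH, sandwich, Matrix.sum_apply, Matrix.smul_apply, vecMulVec_apply, smul_eq_mul]

lemma gsum (x : Fin d → ℝ) (u v w : Fin d) :
    (∑ p : PairIdx d, skewBasis p u v * (skewBasis p).mulVec x w)
      = (if w = u then x v else 0) - (if w = v then x u else 0) := by
  rw [show (∑ p : PairIdx d, skewBasis p u v * (skewBasis p).mulVec x w)
      = ∑ p : PairIdx d, (skewBasis p).mulVec x w * skewBasis p u v from
    Finset.sum_congr rfl fun p _ => mul_comm _ _, sumD]
  rcases lt_trichotomy u v with h|h|h
  · rw [dif_pos h, dif_neg (asymm h), mulVec_skewBasis]; simp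
  · subst h; simp only [lt_self_iff_false, dite_false]; simp
  · rw [dif_neg (asymm h), dif_pos h, mulVec_skewBasis]
    simp only [sub_zero, zero_sub]; ring

lemma skew_eq_sum {A : Matrix (Fin d) (Fin d) ℝ} (hskew : Aᵀ = -A) (s t : Fin d) :
    A s t = ∑ p : PairIdx d, A p.1.1 p.1.2 * skewBasis p s t := by
  have hsk : ∀ u v, A v u = -A u v := fun u v => by
    have := congrFun (congrFun hskew u) v
    simpa [Matrix.transpose_apply] using this
  rw [sumD]
  rcases lt_trichotomy s t with h|h|h
  · rw [dif_pos h, dif_neg (asymm h)]; simp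
  · subst h; simp only [lt_self_iff_false, dite_false]
    have := hsk s s; linarith
  · rw [dif_neg (asymm h), dif_pos h]
    have := hsk t s; simp [this]

lemma double_factor (u v u' v' : Fin d) (f g : PairIdx d → ℝ) :
    (∑ p : PairIdx d, ∑ q : PairIdx d, skewBasis p u v * skewBasis q u' v' * (f p * g q))
      = (∑ p : PairIdx d, skewBasis p u v * f p) * (∑ q : PairIdx d, skewBasis q u' v' * g q) := by
  rw [Finset.sum_mul_sum]
  exact Finset.sum_congr rfl fun p _ => Finset.sum_congr rfl fun q _ => by ring

lemma zsum {A : Matrix (Fin d) (Fin d) ℝ} (hskew : Aᵀ = -A) (u v : Fin d) :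
    (∑ p : PairIdx d, skewBasis p u v * A p.1.1 p.1.2) = A u v := by
  rw [show (∑ p : PairIdx d, skewBasis p u v * A p.1.1 p.1.2)
      = ∑ p : PairIdx d, A p.1.1 p.1.2 * skewBasis p u v from
    Finset.sum_congr rfl fun p _ => mul_comm _ _]
  exact (skew_eq_sum hskew u v).symm

noncomputable def pH {d : ℕ} (a b c e : Fin d) : Matrix (PairIdx d) (PairIdx d) ℝ :=
  fun p q => (1/2) * (skewBasis p a b * skewBasis q c e + skewBasis q a b * skewBasis p c e
    - skewBasis p a c * skewBasis q b e - skewBasis q a c * skewBasis p b e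
    + skewBasis p a e * skewBasis q b c + skewBasis q a e * skewBasis p b c)

lemma pH_symm (a b c e : Fin d) : (pH a b c e).IsSymm := by
  ext p q
  simp only [Matrix.transpose_apply, pH]
  ring

lemma pH_bilin (a b c e : Fin d) (f g : PairIdx d → ℝ) :
    (∑ p : PairIdx d, ∑ q : PairIdx d, pH a b c e p q * (f p * g q))
      = (1/2) * ((∑ p : PairIdx d, skewBasis p a b * f p)
            * (∑ q : PairIdx d, skewBasis q c e * g q)
        + (∑ p : PairIdx d, skewBasis p c e * f p)
            * (∑ q : PairIdx d, skewBasis q a b * g q)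
        - (∑ p : PairIdx d, skewBasis p a c * f p)
            * (∑ q : PairIdx d, skewBasis q b e * g q)
        - (∑ p : PairIdx d, skewBasis p b e * f p)
            * (∑ q : PairIdx d, skewBasis q a c * g q)
        + (∑ p : PairIdx d, skewBasis p a e * f p)
            * (∑ q : PairIdx d, skewBasis q b c * g q)
        + (∑ p : PairIdx d, skewBasis p b c * f p)
            * (∑ q : PairIdx d, skewBasis q a e * g q)) := by
  rw [← double_factor, ← double_factor, ← double_factor, ← double_factor, ← double_factor,
    ← double_factor]
  simp only [Finset.mul_sum, ← Finset.sum_add_distrib, ← Finset.sum_sub_distrib]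
  refine Finset.sum_congr rfl fun p _ => Finset.sum_congr rfl fun q _ => ?_
  simp only [pH]
  ring

lemma dot_mulVec_expand (H : Matrix (PairIdx d) (PairIdx d) ℝ) (w w' : PairIdx d → ℝ) :
    w ⬝ᵥ H.mulVec w' = ∑ p : PairIdx d, ∑ q : PairIdx d, H p q * (w p * w' q) := by
  simp only [dotProduct, Matrix.mulVec, Finset.mul_sum]
  exact Finset.sum_congr rfl fun p _ => Finset.sum_congr rfl fun q _ => by ring

lemma sum_mulVecR {ι : Type*} (s : Finset ι) (f : ι → Matrix (Fin d) (Fin d) ℝ) (y : Fin d → ℝ) :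
    (∑ i ∈ s, f i) *ᵥ y = ∑ i ∈ s, f i *ᵥ y := by
  ext k
  simp only [Matrix.mulVec, dotProduct, Finset.sum_apply, Matrix.sum_apply, Finset.sum_mul]
  exact Finset.sum_comm

lemma dot_sumR {ι : Type*} (s : Finset ι) (g : ι → Fin d → ℝ) (y : Fin d → ℝ) :
    y ⬝ᵥ (∑ i ∈ s, g i) = ∑ i ∈ s, y ⬝ᵥ g i := by
  simp only [dotProduct, Finset.sum_apply, Finset.mul_sum]
  exact Finset.sum_comm

lemma vecMulVec_mulVecR (u w y : Fin d → ℝ) :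
    (vecMulVec u w) *ᵥ y = (w ⬝ᵥ y) • u := by
  ext k
  simp only [Matrix.mulVec, dotProduct, vecMulVec_apply, Pi.smul_apply, smul_eq_mul,
    Finset.sum_mul, Finset.mul_sum]
  exact Finset.sum_congr rfl fun j _ => by ring

lemma quad_cH (H : Matrix (PairIdx d) (PairIdx d) ℝ) (x y : Fin d → ℝ) :
    y ⬝ᵥ (cH H x).mulVec y
      = ∑ p : PairIdx d, ∑ q : PairIdx d,
          H p q * ((y ⬝ᵥ (skewBasis p).mulVec x) * (y ⬝ᵥ (skewBasis q).mulVec x)) := by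
  simp only [cH, sandwich, sum_mulVecR, dot_sumR]
  refine Finset.sum_congr rfl fun p _ => Finset.sum_congr rfl fun q _ => ?_
  rw [smul_mulVec, vecMulVec_mulVecR]
  simp only [dotProduct_smul, smul_eq_mul]
  rw [dotProduct_comm ((skewBasis q).mulVec x) y]
  ring

lemma cH_pH (a b c e : Fin d) (x : Fin d → ℝ) : cH (pH (d:=d) a b c e) x = 0 := by
  ext s t
  rw [cH_apply]
  rw [show (∑ p : PairIdx d, ∑ q : PairIdx d,
        pH a b c e p q * ((skewBasis p).mulVec x s * (skewBasis q).mulVec x t))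
      = _ from pH_bilin a b c e (fun p => (skewBasis p).mulVec x s)
        (fun q => (skewBasis q).mulVec x t)]
  simp only [gsum, Matrix.zero_apply]
  split_ifs <;> subst_vars <;> ring

lemma skew_entry {A : Matrix (Fin d) (Fin d) ℝ} (hskew : Aᵀ = -A) (u v : Fin d) :
    A v u = -A u v := by
  have := congrFun (congrFun hskew u) v
  simpa [Matrix.transpose_apply] using this

lemma skew_diag {A : Matrix (Fin d) (Fin d) ℝ} (hskew : Aᵀ = -A) (u : Fin d) : A u u = 0 := by
  have := skew_entry hskew u u; linarith

lemma z_pH {A : Matrix (Fin d) (Fin d) ℝ} (hskew : Aᵀ = -A) (a b c e : Fin d) :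
    (fun p : PairIdx d => A p.1.1 p.1.2) ⬝ᵥ
        (pH a b c e).mulVec (fun p : PairIdx d => A p.1.1 p.1.2)
      = A a b * A c e - A a c * A b e + A a e * A b c := by
  rw [dot_mulVec_expand, pH_bilin]
  simp only [zsum hskew]
  ring

lemma rank_ge_two {A : Matrix (Fin d) (Fin d) ℝ} (hskew : Aᵀ = -A) {a b : Fin d}
    (hab : A a b ≠ 0) : 2 ≤ A.rank := by
  classical
  set v : Fin 2 → (Fin d → ℝ) := ![fun k => A k a, fun k => A k b] with hv
  have hli : LinearIndependent ℝ v := by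
    rw [Fintype.linearIndependent_iff]
    intro g hg
    have ha := congrFun hg a
    have hb := congrFun hg b
    simp only [hv, Fin.sum_univ_two, Pi.add_apply, Pi.smul_apply, smul_eq_mul,
      Matrix.cons_val_zero, Matrix.cons_val_one, Matrix.head_cons, Pi.zero_apply] at ha hb
    rw [skew_diag hskew a] at ha
    rw [skew_diag hskew b, skew_entry hskew a b] at hb
    have hg1 : g 1 = 0 := by
      rcases mul_eq_zero.mp (show g 1 * A a b = 0 by linarith) with h | h
      · exact h
      · exact absurd h hab
    have hg0 : g 0 = 0 := by
      rcases mul_eq_zero.mp (show g 0 * A a b = 0 by linarith) with h | h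
      · exact h
      · exact absurd h hab
    intro i; fin_cases i <;> assumption
  have hsub : Submodule.span ℝ (Set.range v) ≤ LinearMap.range A.mulVecLin := by
    rw [Submodule.span_le]
    rintro w ⟨i, rfl⟩
    fin_cases i
    · exact ⟨Pi.single a 1, by ext k; simp [hv, Matrix.mulVecLin_apply]⟩
    · exact ⟨Pi.single b 1, by ext k; simp [hv, Matrix.mulVecLin_apply]⟩
  have hmono := Submodule.finrank_mono hsub
  rw [finrank_span_eq_card hli] at hmono
  simpa [Matrix.rank] using hmono

lemma rank_le_two {A : Matrix (Fin d) (Fin d) ℝ} (u v : Fin d → ℝ)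
    (h : ∀ k l, A k l = u k * v l - v k * u l) : A.rank ≤ 2 := by
  have hBC : A = (Matrix.of fun k (i : Fin 2) => ![u k, -v k] i)
      * (Matrix.of fun (i : Fin 2) l => ![v l, u l] i) := by
    ext k l
    rw [h k l]
    simp only [Matrix.mul_apply, Fin.sum_univ_two, Matrix.of_apply, Matrix.cons_val_zero,
      Matrix.cons_val_one, Matrix.head_cons]
    ring
  calc A.rank ≤ (Matrix.of fun k (i : Fin 2) => ![u k, -v k] i).rank := by
        rw [hBC]; exact Matrix.rank_mul_le_left _ _
    _ ≤ Fintype.card (Fin 2) := Matrix.rank_le_card_width _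
    _ = 2 := by simp

lemma pluecker_of_rank_le {A : Matrix (Fin d) (Fin d) ℝ} (hskew : Aᵀ = -A)
    (hr : A.rank ≤ 2) (a b k l : Fin d) :
    A a b * (A a b * A k l - A a k * A b l + A a l * A b k) = 0 := by
  classical
  set w : Fin 3 → (Fin d → ℝ) := ![fun r => A r a, fun r => A r b, fun r => A r l] with hw
  have hdep : ¬ LinearIndependent ℝ w := by
    intro hli
    have hsub : Submodule.span ℝ (Set.range w) ≤ LinearMap.range A.mulVecLin := by
      rw [Submodule.span_le]
      rintro y ⟨i, rfl⟩
      fin_cases i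
      · exact ⟨Pi.single a 1, by ext r; simp [hw, Matrix.mulVecLin_apply]⟩
      · exact ⟨Pi.single b 1, by ext r; simp [hw, Matrix.mulVecLin_apply]⟩
      · exact ⟨Pi.single l 1, by ext r; simp [hw, Matrix.mulVecLin_apply]⟩
    have hmono := Submodule.finrank_mono hsub
    rw [finrank_span_eq_card hli] at hmono
    have h32 : (3:ℕ) ≤ 2 := by
      refine le_trans ?_ hr
      simpa [Matrix.rank] using hmono
    omega
  rw [Fintype.linearIndependent_iff] at hdep
  push_neg at hdep
  obtain ⟨g, hg, i0, hi0⟩ := hdep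
  set M : Matrix (Fin 3) (Fin 3) ℝ :=
    Matrix.of (fun r c => A (![a,b,k] r) (![a,b,l] c)) with hM
  have hMg : M *ᵥ g = 0 := by
    ext r
    have hr3 := congrFun hg (![a,b,k] r)
    simp only [hw, Fin.sum_univ_three, Pi.add_apply, Pi.smul_apply, smul_eq_mul,
      Matrix.cons_val_zero, Matrix.cons_val_one, Matrix.head_cons,
      Matrix.cons_val_two, Matrix.tail_cons, Pi.zero_apply] at hr3
    simp only [hM, Matrix.mulVec, dotProduct, Fin.sum_univ_three, Matrix.of_apply,
      Matrix.cons_val_zero, Matrix.cons_val_one, Matrix.head_cons,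
      Matrix.cons_val_two, Matrix.tail_cons, Pi.zero_apply]
    linarith [hr3]
  have hgne : g ≠ 0 := fun h => hi0 (by rw [h]; rfl)
  have hdet : M.det = 0 := Matrix.exists_mulVec_eq_zero_iff.mp ⟨g, hgne, hMg⟩
  have hexp : M.det = A a b * (A a b * A k l - A a k * A b l + A a l * A b k) := by
    rw [Matrix.det_fin_three]
    simp only [hM, Matrix.of_apply, Matrix.cons_val_zero, Matrix.cons_val_one,
      Matrix.head_cons, Matrix.cons_val_two, Matrix.tail_cons]
    rw [skew_diag hskew a, skew_diag hskew b, skew_entry hskew a b,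
      skew_entry hskew a k, skew_entry hskew b k]
    ring
  rw [← hexp, hdet]

lemma hdecomp {A : Matrix (Fin d) (Fin d) ℝ} {a b : Fin d} (hab : A a b ≠ 0)
    (hP : ∀ k l, A a b * A k l - A a k * A b l + A a l * A b k = 0) (k l : Fin d) :
    A k l = ((A a b)⁻¹ * A a k) * (A b l) - (A b k) * ((A a b)⁻¹ * A a l) := by
  have key : A a b * A k l = A a k * A b l - A b k * A a l := by
    linear_combination hP k l
  have h2 : A k l = (A a b)⁻¹ * (A a k * A b l - A b k * A a l) := by
    rw [← key, inv_mul_cancel_left₀ hab]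
  rw [h2]; ring

/-- A nonzero skew-symmetric matrix `A` has rank 2 if and only if the
vector `z_A` of its strictly upper-triangular entries satisfies `z_Aᵀ H z_A = 0` for every
`H ∈ K = { H ∈ S^m : c_H ≡ 0 }`. -/
theorem stmt12 (d : ℕ) (hd : 1 ≤ d)
    (A : Matrix (Fin d) (Fin d) ℝ) (hskew : Aᵀ = -A) (hA : A ≠ 0) :
    A.rank = 2 ↔
      ∀ H : Matrix (PairIdx d) (PairIdx d) ℝ, H.IsSymm → (∀ x, cH H x = 0) →
        (fun p : PairIdx d => A p.1.1 p.1.2) ⬝ᵥ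
          H.mulVec (fun p : PairIdx d => A p.1.1 p.1.2) = 0 := by
  have hent : ∃ a b, A a b ≠ 0 := by
    by_contra hc; push_neg at hc
    exact hA (by ext i j; simpa using hc i j)
  obtain ⟨a, b, hab⟩ := hent
  constructor
  · intro hr H hsymm hc0
    have hP : ∀ k l, A a b * A k l - A a k * A b l + A a l * A b k = 0 := fun k l =>
      (mul_eq_zero.mp (pluecker_of_rank_le hskew (le_of_eq hr) a b k l)).resolve_left hab
    set x0 : Fin d → ℝ := fun r => A b r with hx0
    set y0 : Fin d → ℝ := fun r => (A a b)⁻¹ * A a r with hy0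
    have hzH : ∀ p : PairIdx d, A p.1.1 p.1.2 = y0 ⬝ᵥ (skewBasis p).mulVec x0 := by
      intro p
      rw [dot_skew, hdecomp hab hP p.1.1 p.1.2]
      simp only [hx0, hy0]
      ring
    calc (fun p : PairIdx d => A p.1.1 p.1.2) ⬝ᵥ
          H.mulVec (fun p : PairIdx d => A p.1.1 p.1.2)
        = ∑ p : PairIdx d, ∑ q : PairIdx d,
            H p q * ((y0 ⬝ᵥ (skewBasis p).mulVec x0) * (y0 ⬝ᵥ (skewBasis q).mulVec x0)) := by
          rw [dot_mulVec_expand]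
          exact Finset.sum_congr rfl fun p _ => Finset.sum_congr rfl fun q _ => by
            rw [← hzH p, ← hzH q]
      _ = y0 ⬝ᵥ (cH H x0).mulVec y0 := (quad_cH H x0 y0).symm
      _ = 0 := by rw [hc0 x0]; simp
  · intro hK
    have hP : ∀ u v w r : Fin d, A u v * A w r - A u w * A v r + A u r * A v w = 0 := by
      intro u v w r
      have h := hK (pH u v w r) (pH_symm u v w r) (cH_pH u v w r)
      rwa [z_pH hskew] at h
    have hub : A.rank ≤ 2 := by
      refine rank_le_two (fun r => (A a b)⁻¹ * A a r) (fun r => A b r) ?_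
      intro k l
      exact hdecomp hab (fun k l => hP a b k l) k l
    have hlb := rank_ge_two hskew hab
    omega
end

section
/- Let d ≥ 1 and let p : ℝ^d → ℝ be a polynomial function of total degree at most 2. Suppose the set E = { x ∈ ℝ^d : p(x) ≥ 0 } is compact and contains at least two points. Then the (constant) Hessian matrix ∇²p is negative definite, and E is the image of the closed Euclidean unit ball { x : ‖x‖ ≤ 1 } under an invertible affine map of ℝ^d. -/
open Matrix MvPolynomial

lemma fs_sum_eq_zero {σ : Type*} {m : σ →₀ ℕ} (h : (m.sum fun _ e => e) = 0) : m = 0 := by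
  ext j
  by_cases hj : j ∈ m.support
  · have h2 : m j ≤ m.sum fun _ e => e := Finset.single_le_sum (fun _ _ => Nat.zero_le _) hj
    rw [h] at h2
    simpa using Nat.le_zero.mp h2
  · simpa using Finsupp.notMem_support_iff.mp hj

lemma fs_sum_eq_one {σ : Type*} {m : σ →₀ ℕ} (h : (m.sum fun _ e => e) = 1) :
    ∃ i, m = Finsupp.single i 1 := by
  classical
  have hne : m ≠ 0 := by rintro rfl; simp [Finsupp.sum] at h
  obtain ⟨i, hi⟩ := Finsupp.support_nonempty_iff.mpr hne
  refine ⟨i, ?_⟩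
  have hi1 : 1 ≤ m i := Nat.one_le_iff_ne_zero.mpr (Finsupp.mem_support_iff.mp hi)
  have hle : m i ≤ m.sum fun _ e => e := Finset.single_le_sum (fun _ _ => Nat.zero_le _) hi
  ext j
  rcases eq_or_ne j i with rfl | hj
  · simp; omega
  · have : m i + m j ≤ m.sum fun _ e => e := by
      by_cases hjs : j ∈ m.support
      · rw [Finsupp.sum, ← Finset.add_sum_erase _ _ hi]
        exact add_le_add le_rfl (Finset.single_le_sum (fun _ _ => Nat.zero_le _)
          (Finset.mem_erase.mpr ⟨hj, hjs⟩))
      · simpa [Finsupp.notMem_support_iff.mp hjs] using hle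
    simp [Finsupp.single_apply, hj.symm]
    omega

lemma fs_sum_eq_two {σ : Type*} {m : σ →₀ ℕ} (h : (m.sum fun _ e => e) = 2) :
    ∃ i j, m = Finsupp.single i 1 + Finsupp.single j 1 := by
  have hne : m ≠ 0 := by rintro rfl; simp [Finsupp.sum] at h
  obtain ⟨i, hi⟩ := Finsupp.support_nonempty_iff.mpr hne
  have hi1 : 1 ≤ m i := Nat.one_le_iff_ne_zero.mpr (Finsupp.mem_support_iff.mp hi)
  have hle : Finsupp.single i 1 ≤ m := Finsupp.single_le_iff.mpr hi1
  obtain ⟨m', hm'⟩ : ∃ m', m = m' + Finsupp.single i 1 := ⟨m - Finsupp.single i 1,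
    (tsub_add_cancel_of_le hle).symm⟩
  have hs : (m'.sum fun _ e => e) = 1 := by
    have := h
    rw [hm', Finsupp.sum_add_index' (fun _ => rfl) (fun _ _ _ => rfl)] at this
    simpa using this
  obtain ⟨j, hj⟩ := fs_sum_eq_one hs
  exact ⟨j, i, by rw [hm', hj]⟩

def IsQuad {d : ℕ} (f : (Fin d → ℝ) → ℝ) : Prop :=
  ∃ Q : Matrix (Fin d) (Fin d) ℝ, Q.IsSymm ∧ ∃ v : Fin d → ℝ, ∃ r : ℝ,
    ∀ x, f x = x ⬝ᵥ Q.mulVec x + v ⬝ᵥ x + r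

lemma isQuad_add {d : ℕ} {f g : (Fin d → ℝ) → ℝ} (hf : IsQuad f) (hg : IsQuad g) :
    IsQuad (fun x => f x + g x) := by
  obtain ⟨Q, hQ, v, r, hf⟩ := hf
  obtain ⟨Q', hQ', v', r', hg⟩ := hg
  refine ⟨Q + Q', hQ.add hQ', v + v', r + r', fun x => ?_⟩
  simp [hf, hg, Matrix.add_mulVec, dotProduct_add, add_dotProduct]
  ring

lemma isQuad_const {d : ℕ} (c : ℝ) : IsQuad (fun _ : Fin d → ℝ => c) :=
  ⟨0, Matrix.isSymm_zero, 0, c, fun x => by simp⟩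

lemma isQuad_lin {d : ℕ} (c : ℝ) (i : Fin d) : IsQuad (fun x : Fin d → ℝ => c * x i) := by
  refine ⟨0, Matrix.isSymm_zero, fun j => if j = i then c else 0, 0, fun x => ?_⟩
  simp [dotProduct, Finset.sum_ite_eq, ite_mul]

lemma isQuad_quad {d : ℕ} (c : ℝ) (i j : Fin d) :
    IsQuad (fun x : Fin d → ℝ => c * (x i * x j)) := by
  refine ⟨fun a b => (if a = i ∧ b = j then c / 2 else 0) + (if a = j ∧ b = i then c / 2 else 0),
    ?_, 0, 0, fun x => ?_⟩
  · ext a b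
    show (if b = i ∧ a = j then c / 2 else 0) + (if b = j ∧ a = i then c / 2 else 0) =
      (if a = i ∧ b = j then c / 2 else 0) + (if a = j ∧ b = i then c / 2 else 0)
    rw [add_comm]
    congr 1 <;> · congr 1; simp [and_comm]
  · have : ∀ a, (Matrix.mulVec (fun a b => (if a = i ∧ b = j then c / 2 else 0) +
        (if a = j ∧ b = i then c / 2 else 0)) x) a
        = (if a = i then c / 2 * x j else 0) + (if a = j then c / 2 * x i else 0) := by
      intro a
      simp only [Matrix.mulVec, dotProduct, add_mul, Finset.sum_add_distrib, ite_mul, zero_mul]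
      congr 1
      · by_cases ha : a = i <;> simp [ha]
      · by_cases ha : a = j <;> simp [ha]
    simp only [this, dotProduct, mul_add, Finset.sum_add_distrib, mul_ite, mul_zero,
      Finset.sum_ite_eq', Finset.mem_univ, if_true, Pi.zero_apply, zero_mul,
      Finset.sum_const_zero]
    ring

lemma isQuad_congr {d : ℕ} {f g : (Fin d → ℝ) → ℝ} (h : ∀ x, f x = g x) (hg : IsQuad g) :
    IsQuad f := by
  obtain ⟨Q, hQ, v, r, hr⟩ := hg
  exact ⟨Q, hQ, v, r, fun x => (h x).trans (hr x)⟩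

lemma isQuad_monomial {d : ℕ} (m : Fin d →₀ ℕ) (c : ℝ) (hm : (m.sum fun _ e => e) ≤ 2) :
    IsQuad (fun x => MvPolynomial.eval x (monomial m c)) := by
  have heval : ∀ x : Fin d → ℝ, MvPolynomial.eval x (monomial m c)
      = c * m.prod (fun i k => x i ^ k) := fun x => by rw [eval_monomial]
  interval_cases h : (m.sum fun _ e => e)
  · have h0 := fs_sum_eq_zero h
    refine isQuad_congr (g := fun _ => c) (fun x => ?_) (isQuad_const c)
    rw [heval, h0]; simp
  · obtain ⟨i, hi⟩ := fs_sum_eq_one h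
    refine isQuad_congr (g := fun x => c * x i) (fun x => ?_) (isQuad_lin c i)
    rw [heval, hi, Finsupp.prod_single_index (by simp)]; simp
  · obtain ⟨i, j, hij⟩ := fs_sum_eq_two h
    refine isQuad_congr (g := fun x => c * (x i * x j)) (fun x => ?_) (isQuad_quad c i j)
    rw [heval, hij, Finsupp.prod_add_index' (by simp) (fun a b₁ b₂ => pow_add _ _ _),
      Finsupp.prod_single_index (by simp), Finsupp.prod_single_index (by simp)]
    simp

lemma quad_repr {d : ℕ} (P : MvPolynomial (Fin d) ℝ) (hdeg : P.totalDegree ≤ 2) :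
    IsQuad (fun x => MvPolynomial.eval x P) := by
  classical
  have key : ∀ s : Finset (Fin d →₀ ℕ), (∀ m ∈ s, (m.sum fun _ e => e) ≤ 2) →
      IsQuad (fun x => ∑ m ∈ s, MvPolynomial.eval x (monomial m (P.coeff m))) := by
    intro s
    induction s using Finset.induction_on with
    | empty => intro _; exact isQuad_congr (fun x => by simp) (isQuad_const 0)
    | @insert a t hns ih =>
      intro hs
      refine isQuad_congr (fun x => Finset.sum_insert hns)
        (isQuad_add (isQuad_monomial _ _ (hs a (Finset.mem_insert_self a t)))
          (ih fun m hm => hs m (Finset.mem_insert_of_mem hm)))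
  refine isQuad_congr (fun x => ?_) (key P.support fun m hm => le_trans (le_totalDegree hm) hdeg)
  conv_lhs => rw [P.as_sum]
  rw [map_sum]


lemma key_neg {d : ℕ} {f : (Fin d → ℝ) → ℝ} (hcpt : IsCompact {x : Fin d → ℝ | 0 ≤ f x})
    {a : Fin d → ℝ} (ha : 0 ≤ f a) (Q : Matrix (Fin d) (Fin d) ℝ) (v : Fin d → ℝ) (r : ℝ)
    (hrepr : ∀ x, f x = x ⬝ᵥ Q.mulVec x + v ⬝ᵥ x + r) (z : Fin d → ℝ) (hz : z ≠ 0) :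
    z ⬝ᵥ Q.mulVec z < 0 := by
  by_contra hq
  push_neg at hq
  obtain ⟨C, hC⟩ := isBounded_iff_forall_norm_le.mp hcpt.isBounded
  set q := z ⬝ᵥ Q.mulVec z with hqdef
  set b := a ⬝ᵥ Q.mulVec z + z ⬝ᵥ Q.mulVec a + v ⬝ᵥ z with hbdef
  set σ : ℝ := if 0 ≤ b then 1 else -1 with hσ
  have hσb : 0 ≤ σ * b := by
    rcases le_or_gt 0 b with h | h
    · simp [hσ, if_pos h, h]
    · simp [hσ, if_neg (not_le.mpr h)]
      linarith
  have hσsq : σ * σ = 1 := by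
    rcases le_or_gt 0 b with h | h
    · simp [hσ, if_pos h]
    · simp [hσ, if_neg h.not_ge]
  have hσabs : |σ| = 1 := by
    rcases le_or_gt 0 b with h | h
    · simp [hσ, if_pos h]
    · simp [hσ, if_neg h.not_ge]
  have hexp : ∀ t : ℝ, f (a + t • z) = f a + t * b + t ^ 2 * q := by
    intro t
    simp only [hrepr, hqdef, hbdef, Matrix.mulVec_add, Matrix.mulVec_smul, dotProduct_add,
      add_dotProduct, dotProduct_smul, smul_dotProduct, smul_eq_mul]
    ring
  have hmem : ∀ s : ℝ, 0 ≤ s → 0 ≤ f (a + (σ * s) • z) := by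
    intro s hs
    rw [hexp]
    have h1 : (σ * s) * b = s * (σ * b) := by ring
    have h2 : (σ * s) ^ 2 * q = s ^ 2 * q := by
      have : (σ * s) ^ 2 = s ^ 2 := by nlinarith [hσsq]
      rw [this]
    rw [h1, h2]
    have : 0 ≤ s * (σ * b) := mul_nonneg hs hσb
    nlinarith [sq_nonneg s, mul_nonneg (sq_nonneg s) hq]
  have hz0 : 0 < ‖z‖ := norm_pos_iff.mpr hz
  have haC : ‖a‖ ≤ C := hC a ha
  set s : ℝ := (C + ‖a‖ + 1) / ‖z‖ with hsdef
  have hC0 : 0 ≤ C := le_trans (norm_nonneg a) haC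
  have hs0 : 0 ≤ s := by
    apply div_nonneg _ (le_of_lt hz0)
    linarith [norm_nonneg a]
  have hmem2 := hC _ (hmem s hs0)
  have hnorm : ‖(σ * s) • z‖ = s * ‖z‖ := by
    rw [norm_smul, Real.norm_eq_abs, abs_mul, hσabs, one_mul, abs_of_nonneg hs0]
  have htri : ‖(σ * s) • z‖ ≤ ‖a + (σ * s) • z‖ + ‖a‖ := by
    have := norm_sub_le (a + (σ * s) • z) a
    simpa using this
  have hsz : s * ‖z‖ = C + ‖a‖ + 1 := by
    rw [hsdef]; field_simp
  nlinarith [htri, hnorm, hmem2]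


open scoped MatrixOrder in
lemma part2 {d : ℕ} {f : (Fin d → ℝ) → ℝ} (Q : Matrix (Fin d) (Fin d) ℝ) (hsym : Q.IsSymm)
    (v : Fin d → ℝ) (r : ℝ) (hrepr : ∀ x, f x = x ⬝ᵥ Q.mulVec x + v ⬝ᵥ x + r)
    (negdef : ∀ z : Fin d → ℝ, z ≠ 0 → z ⬝ᵥ Q.mulVec z < 0)
    {a b : Fin d → ℝ} (ha : 0 ≤ f a) (hb : 0 ≤ f b) (hab : a ≠ b) :
    ∃ (M : Matrix (Fin d) (Fin d) ℝ) (w : Fin d → ℝ), IsUnit M ∧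
      {x : Fin d → ℝ | 0 ≤ f x} = (fun x => M.mulVec x + w) '' {x : Fin d → ℝ | x ⬝ᵥ x ≤ 1} := by
  classical
  have hQherm : Q.IsHermitian := by
    rw [Matrix.IsHermitian, Matrix.conjTranspose_eq_transpose_of_trivial]; exact hsym
  have hNQ : (-Q).PosDef := by
    refine Matrix.PosDef.of_dotProduct_mulVec_pos (by simpa using hQherm.neg) fun x hx => ?_
    have := negdef x hx
    simp only [star_trivial, Matrix.neg_mulVec, dotProduct_neg]
    linarith
  have hdetQ : IsUnit Q.det := by
    have h1 : (0:ℝ) < (-Q).det := hNQ.det_pos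
    rw [Matrix.det_neg] at h1
    refine isUnit_iff_ne_zero.mpr fun h => ?_
    rw [h, mul_zero] at h1; exact lt_irrefl _ h1
  set c : Fin d → ℝ := (-(1/2 : ℝ)) • (Q⁻¹.mulVec v) with hc
  have hQc : Q.mulVec c = (-(1/2 : ℝ)) • v := by
    rw [hc, Matrix.mulVec_smul, Matrix.mulVec_mulVec, Matrix.mul_nonsing_inv _ hdetQ,
      Matrix.one_mulVec]
  have hsymdot : ∀ u w : Fin d → ℝ, u ⬝ᵥ Q.mulVec w = w ⬝ᵥ Q.mulVec u := by
    intro u w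
    calc u ⬝ᵥ Q.mulVec w = (u ᵥ* Q) ⬝ᵥ w := dotProduct_mulVec _ _ _
    _ = (Q.mulVec u) ⬝ᵥ w := by rw [← Matrix.vecMul_transpose, hsym]
    _ = w ⬝ᵥ Q.mulVec u := dotProduct_comm _ _
  have h1 : ∀ x, x ⬝ᵥ Q.mulVec c = -(1/2) * (v ⬝ᵥ x) := by
    intro x
    rw [hQc, dotProduct_smul, smul_eq_mul, dotProduct_comm]
  have h2 : ∀ x, c ⬝ᵥ Q.mulVec x = -(1/2) * (v ⬝ᵥ x) := by
    intro x; rw [hsymdot c x, h1]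
  set s : ℝ := r - c ⬝ᵥ Q.mulVec c with hs
  have hkey : ∀ x, f x = (x - c) ⬝ᵥ Q.mulVec (x - c) + s := by
    intro x
    rw [hrepr]
    simp only [Matrix.mulVec_sub, dotProduct_sub, sub_dotProduct, h1, h2, hs]
    ring
  have hqle : ∀ u : Fin d → ℝ, u ⬝ᵥ Q.mulVec u ≤ 0 := by
    intro u
    rcases eq_or_ne u 0 with rfl | hu
    · simp
    · exact le_of_lt (negdef u hu)
  have hs0 : 0 ≤ s := by
    have := hkey a ▸ ha
    have := hqle (a - c)
    linarith
  have heqc : ∀ x : Fin d → ℝ, 0 ≤ f x → s = 0 → x = c := by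
    intro x hx hs0'
    have hk := hkey x ▸ hx
    have := hqle (x - c)
    by_contra hxc
    have hne : x - c ≠ 0 := sub_ne_zero.mpr hxc
    have := negdef _ hne
    rw [hs0'] at hk
    linarith
  have hspos : 0 < s := by
    rcases lt_or_eq_of_le hs0 with h | h
    · exact h
    · exact absurd ((heqc a ha h.symm).trans (heqc b hb h.symm).symm) hab
  set A : Matrix (Fin d) (Fin d) ℝ := s⁻¹ • (-Q) with hA
  have hApd : A.PosDef := by
    refine Matrix.PosDef.of_dotProduct_mulVec_pos ?_ ?_
    · rw [hA, Matrix.IsHermitian, Matrix.conjTranspose_smul]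
      simp only [star_trivial]
      rw [hNQ.isHermitian]
    · intro x hx
      simp only [hA, star_trivial, Matrix.smul_mulVec, dotProduct_smul, smul_eq_mul]
      have := negdef x hx
      have : 0 < x ⬝ᵥ (-Q).mulVec x := by
        simp only [Matrix.neg_mulVec, dotProduct_neg]; linarith
      exact mul_pos (inv_pos.mpr hspos) this
  set S := CFC.sqrt A with hSdef
  have hSS : S * S = A := CFC.sqrt_mul_sqrt_self A hApd.posSemidef.nonneg
  have hSsymm : Sᵀ = S := by
    have := (CFC.sqrt_nonneg A).posSemidef.isHermitian
    rwa [Matrix.IsHermitian, Matrix.conjTranspose_eq_transpose_of_trivial] at this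
  have hdetS : IsUnit S.det := by
    refine isUnit_iff_ne_zero.mpr fun h => ?_
    have := hApd.det_pos
    rw [← hSS, Matrix.det_mul, h, mul_zero] at this
    exact lt_irrefl _ this
  have hAq : ∀ u : Fin d → ℝ, (S.mulVec u) ⬝ᵥ (S.mulVec u) = s⁻¹ * (u ⬝ᵥ (-Q).mulVec u) := by
    intro u
    have hSu : S.mulVec u = u ᵥ* S := by rw [← Matrix.vecMul_transpose, hSsymm]
    have e1 : u ⬝ᵥ A.mulVec u = (S.mulVec u) ⬝ᵥ (S.mulVec u) := by
      rw [← hSS, ← Matrix.mulVec_mulVec, dotProduct_mulVec, ← hSu]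
    rw [← e1]
    simp only [hA, Matrix.smul_mulVec, dotProduct_smul, smul_eq_mul]
  have hQq : ∀ u : Fin d → ℝ, u ⬝ᵥ (-Q).mulVec u = s * ((S.mulVec u) ⬝ᵥ (S.mulVec u)) := by
    intro u
    rw [hAq, ← mul_assoc, mul_inv_cancel₀ hspos.ne', one_mul]
  have hmemiff : ∀ x, 0 ≤ f x ↔ (x - c) ⬝ᵥ (-Q).mulVec (x - c) ≤ s := by
    intro x
    rw [hkey]
    simp only [Matrix.neg_mulVec, dotProduct_neg]
    constructor <;> intro <;> linarith
  refine ⟨S⁻¹, c, ?_, ?_⟩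
  · exact Matrix.isUnit_nonsing_inv_iff.mpr ((Matrix.isUnit_iff_isUnit_det _).mpr hdetS)
  · ext x
    simp only [Set.mem_setOf_eq, Set.mem_image]
    rw [hmemiff]
    constructor
    · intro hx
      refine ⟨S.mulVec (x - c), ?_, ?_⟩
      · show (S.mulVec (x - c)) ⬝ᵥ (S.mulVec (x - c)) ≤ 1
        rw [hAq]
        calc s⁻¹ * ((x - c) ⬝ᵥ (-Q).mulVec (x - c)) ≤ s⁻¹ * s :=
          mul_le_mul_of_nonneg_left hx (inv_nonneg.mpr hs0)
        _ = 1 := inv_mul_cancel₀ hspos.ne'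
      · rw [Matrix.mulVec_mulVec, Matrix.nonsing_inv_mul _ hdetS, Matrix.one_mulVec]
        abel
    · rintro ⟨y, hy, rfl⟩
      have hxc : S⁻¹.mulVec y + c - c = S⁻¹.mulVec y := by abel
      rw [hxc, hQq, Matrix.mulVec_mulVec, Matrix.mul_nonsing_inv _ hdetS, Matrix.one_mulVec]
      calc s * (y ⬝ᵥ y) ≤ s * 1 := mul_le_mul_of_nonneg_left hy hs0
      _ = s := mul_one s

/-- Let `p : ℝ^d → ℝ` be a polynomial function of total degree at most 2
and suppose `E = {x : p(x) ≥ 0}` is compact and contains at least two points. Then the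
(constant) Hessian of `p` is negative definite — i.e. in any representation
`p(x) = xᵀ Q x + vᵀ x + r` with `Q` symmetric (so the Hessian is `2Q`), `Q` is negative
definite — and `E` is the image of the closed Euclidean unit ball under an invertible
affine map of `ℝ^d`. -/

theorem stmt17 (d : ℕ) (hd : 1 ≤ d)
    (P : MvPolynomial (Fin d) ℝ) (hdeg : P.totalDegree ≤ 2)
    (hcpt : IsCompact {x : Fin d → ℝ | 0 ≤ MvPolynomial.eval x P})
    (htwo : ∃ a b : Fin d → ℝ, 0 ≤ MvPolynomial.eval a P ∧ 0 ≤ MvPolynomial.eval b P ∧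
      a ≠ b) :
    (∀ Q : Matrix (Fin d) (Fin d) ℝ, Q.IsSymm → ∀ v : Fin d → ℝ, ∀ r : ℝ,
      (∀ x, MvPolynomial.eval x P = x ⬝ᵥ Q.mulVec x + v ⬝ᵥ x + r) →
      ∀ z : Fin d → ℝ, z ≠ 0 → z ⬝ᵥ Q.mulVec z < 0) ∧
    (∃ (M : Matrix (Fin d) (Fin d) ℝ) (v : Fin d → ℝ), IsUnit M ∧
      {x : Fin d → ℝ | 0 ≤ MvPolynomial.eval x P} =
        (fun x => M.mulVec x + v) '' {x : Fin d → ℝ | x ⬝ᵥ x ≤ 1}) := by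
  obtain ⟨a, b, ha, hb, hab⟩ := htwo
  constructor
  · intro Q _ v r hrepr z hz
    exact key_neg (f := fun x => MvPolynomial.eval x P) hcpt ha Q v r hrepr z hz
  · obtain ⟨Q, hsym, v, r, hrepr⟩ := quad_repr P hdeg
    exact part2 (f := fun x => MvPolynomial.eval x P) Q hsym v r hrepr
      (fun z hz => key_neg (f := fun x => MvPolynomial.eval x P) hcpt ha Q v r hrepr z hz)
      ha hb hab
end
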